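/- Let $\Gamma$ be the subgraph of the grid $\mathbb{Z}^2$ obtained by removing the open central hole $H=\{(x,y): 3^{h-1} < x < 2\cdot 3^{h-1},\ 3^{h-1} < y < 2\cdot 3^{h-1}\}$ (its interior vertices and incident edges) from the grid on $[0,3^h]\times[0,3^h]$. Then for two vertices $u=(x_1,y_1)$ and $v=(x_2,y_2)$ with $x_1 \le 3^{h-1} \le 2\cdot 3^{h-1} \le x_2$ and $3^{h-1} < y_1, y_2 < 2\cdot 3^{h-1}$, if $\frac{y_1+y_2}{2} \geq \frac{3^h}{2}$ then $d_\Gamma(u,v) = \|u - D\|_1 + 3^{h-1} + \|C - v\|_1$ where $D=(3^{h-1}, 2\cdot 3^{h-1})$ and $C=(2\cdot 3^{h-1}, 2\cdot 3^{h-1})$. -/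

import Mathlib

/-- ℓ¹ distance on ℤ². -/
def l1 (u v : ℤ × ℤ) : ℕ := (u.1 - v.1).natAbs + (u.2 - v.2).natAbs

/-- A point of the box `[0,3^h]²` which is not interior to the central hole
`(3^{h-1}, 2·3^{h-1})²`. -/
def holedOk (h : ℕ) (p : ℤ × ℤ) : Prop :=
  0 ≤ p.1 ∧ p.1 ≤ 3 ^ h ∧ 0 ≤ p.2 ∧ p.2 ≤ 3 ^ h ∧
  ¬ ((3:ℤ) ^ (h - 1) < p.1 ∧ p.1 < 2 * 3 ^ (h - 1) ∧
     (3:ℤ) ^ (h - 1) < p.2 ∧ p.2 < 2 * 3 ^ (h - 1))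

/-- The grid graph on `[0,3^h]²` with the interior of the central hole removed. -/
def holedGraph (h : ℕ) : SimpleGraph (ℤ × ℤ) where
  Adj u v := holedOk h u ∧ holedOk h v ∧ l1 u v = 1
  symm := ⟨by rintro u v ⟨h1, h2, h3⟩; exact ⟨h2, h1, by unfold l1 at *; omega⟩⟩
  loopless := ⟨by rintro u ⟨-, -, h⟩; unfold l1 at h; omega⟩

open SimpleGraph

lemma l1_le_length {h : ℕ} {a b : ℤ × ℤ} (w : (holedGraph h).Walk a b) :
    l1 a b ≤ w.length := by
  induction w with
  | nil => simp [l1]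
  | cons hadj w ih =>
    have hl := hadj.2.2
    simp only [Walk.length_cons]
    unfold l1 at *
    omega

lemma support_ok {h : ℕ} {a b : ℤ × ℤ} (w : (holedGraph h).Walk a b) :
    holedOk h a → ∀ p ∈ w.support, holedOk h p := by
  induction w with
  | nil => intro ha p hp; simp at hp; subst hp; exact ha
  | cons hadj w ih =>
    intro ha p hp
    rw [Walk.support_cons] at hp
    rcases List.mem_cons.mp hp with h1 | h2
    · subst h1; exact ha
    · exact ih hadj.2.1 p h2

lemma exists_fst_eq {h : ℕ} {a b : ℤ × ℤ} (w : (holedGraph h).Walk a b) (c : ℤ) :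
    a.1 ≤ c → c ≤ b.1 → ∃ p ∈ w.support, p.1 = c := by
  induction w with
  | nil => rename_i u; intro h1 h2; exact ⟨u, by simp, by omega⟩
  | @cons u v b hadj w ih =>
    intro h1 h2
    rcases eq_or_lt_of_le h1 with heq | hlt
    · exact ⟨u, by simp, heq⟩
    · have hl := hadj.2.2
      have hv : v.1 ≤ c := by unfold l1 at hl; omega
      obtain ⟨p, hp, hpc⟩ := ih hv h2
      exact ⟨p, by simp [hp], hpc⟩

lemma length_ge_via {h : ℕ} {a b : ℤ × ℤ} (w : (holedGraph h).Walk a b) {p : ℤ × ℤ}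
    (hp : p ∈ w.support) : l1 a p + l1 p b ≤ w.length := by
  have hs := congrArg Walk.length (w.take_spec hp)
  rw [Walk.length_append] at hs
  have h1 := l1_le_length (w.takeUntil p hp)
  have h2 := l1_le_length (w.dropUntil p hp)
  omega

lemma vert_walk (h : ℕ) (x : ℤ) : ∀ n : ℕ, ∀ y : ℤ,
    (∀ z : ℤ, y ≤ z → z ≤ y + n → holedOk h (x, z)) →
    ∃ w : (holedGraph h).Walk (x, y) (x, y + n), w.length = n := by
  intro n
  induction n with
  | zero => intro y _; exact ⟨(Walk.nil).copy rfl (by simp), by simp⟩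
  | succ n ih =>
    intro y hok
    obtain ⟨w, hw⟩ := ih (y + 1) (fun z h1 h2 => hok z (by omega) (by push_cast at h2 ⊢; omega))
    have hadj : (holedGraph h).Adj (x, y) (x, y + 1) :=
      ⟨hok y le_rfl (by push_cast; omega), hok (y + 1) (by omega) (by push_cast; omega),
        by simp [l1]⟩
    exact ⟨(Walk.cons hadj w).copy rfl (Prod.ext_iff.mpr ⟨rfl, by push_cast; ring⟩),
      by simp [hw]⟩

lemma horiz_walk (h : ℕ) (y : ℤ) : ∀ n : ℕ, ∀ x : ℤ,
    (∀ z : ℤ, x ≤ z → z ≤ x + n → holedOk h (z, y)) →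
    ∃ w : (holedGraph h).Walk (x, y) (x + n, y), w.length = n := by
  intro n
  induction n with
  | zero => intro x _; exact ⟨(Walk.nil).copy rfl (by simp), by simp⟩
  | succ n ih =>
    intro x hok
    obtain ⟨w, hw⟩ := ih (x + 1) (fun z h1 h2 => hok z (by omega) (by push_cast at h2 ⊢; omega))
    have hadj : (holedGraph h).Adj (x, y) (x + 1, y) :=
      ⟨hok x le_rfl (by push_cast; omega), hok (x + 1) (by omega) (by push_cast; omega),
        by simp [l1]⟩
    exact ⟨(Walk.cons hadj w).copy rfl (Prod.ext_iff.mpr ⟨by push_cast; ring, rfl⟩),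
      by simp [hw]⟩

/-- Case II distance formula: for `u` on the left of the hole and `v` on the right,
both at heights strictly inside the hole's vertical range, with average height at least
`3^h / 2`, the geodesic goes through the top corners `D` and `C` of the hole. -/
theorem holed_dist_formula (h : ℕ) (hh : 1 ≤ h) (x₁ y₁ x₂ y₂ : ℤ)
    (hu : holedOk h (x₁, y₁)) (hv : holedOk h (x₂, y₂))
    (hx₁ : x₁ ≤ 3 ^ (h - 1)) (hx₂ : 2 * 3 ^ (h - 1) ≤ x₂)
    (hy₁l : (3:ℤ) ^ (h - 1) < y₁) (hy₁r : y₁ < 2 * 3 ^ (h - 1))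
    (hy₂l : (3:ℤ) ^ (h - 1) < y₂) (hy₂r : y₂ < 2 * 3 ^ (h - 1))
    (havg : (3:ℤ) ^ h ≤ y₁ + y₂) :
    (holedGraph h).dist (x₁, y₁) (x₂, y₂) =
      l1 (x₁, y₁) (3 ^ (h - 1), 2 * 3 ^ (h - 1)) + 3 ^ (h - 1) +
        l1 (2 * 3 ^ (h - 1), 2 * 3 ^ (h - 1)) (x₂, y₂) := by
  obtain ⟨M, hMdef⟩ : ∃ M : ℤ, (3:ℤ) ^ (h - 1) = M := ⟨_, rfl⟩
  have hM3 : (3:ℤ) ^ h = 3 * M := by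
    rw [← hMdef]
    conv_lhs => rw [show h = (h - 1) + 1 from by omega]
    rw [pow_succ]; ring
  have hMn : (((3:ℕ) ^ (h - 1) : ℕ) : ℤ) = M := by rw [← hMdef]; push_cast; rfl
  rw [hMdef] at hx₁ hx₂ hy₁l hy₁r hy₂l hy₂r
  rw [hM3] at havg
  have hM2 : 2 ≤ M := by omega
  obtain ⟨hu1, hu2, hu3, hu4, -⟩ := hu.imp id id
  obtain ⟨hv1, hv2, hv3, hv4, -⟩ := hv.imp id id
  simp only at hu1 hu2 hu3 hu4 hv1 hv2 hv3 hv4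
  rw [hM3] at hu2 hu4 hv2 hv4
  -- generic membership helper
  have hok' : ∀ a b : ℤ, 0 ≤ a → a ≤ 3 * M → 0 ≤ b → b ≤ 3 * M →
      (a ≤ M ∨ 2 * M ≤ a ∨ b ≤ M ∨ 2 * M ≤ b) → holedOk h (a, b) := by
    intro a b h1 h2 h3 h4 h5
    refine ⟨h1, ?_, h3, ?_, ?_⟩ <;> simp only
    · rw [hM3]; exact h2
    · rw [hM3]; exact h4
    · rw [hMdef]; omega
  have hokL : ∀ z : ℤ, y₁ ≤ z → z ≤ y₁ + ((2 * M - y₁).toNat : ℤ) → holedOk h (x₁, z) :=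
    fun z h1 h2 => hok' x₁ z hu1 hu2 (by omega) (by omega) (by omega)
  have hokR : ∀ z : ℤ, y₂ ≤ z → z ≤ y₂ + ((2 * M - y₂).toNat : ℤ) → holedOk h (x₂, z) :=
    fun z h1 h2 => hok' x₂ z hv1 hv2 (by omega) (by omega) (by omega)
  have hokT : ∀ z : ℤ, x₁ ≤ z → z ≤ x₁ + ((x₂ - x₁).toNat : ℤ) → holedOk h (z, 2 * M) :=
    fun z h1 h2 => hok' z (2 * M) (by omega) (by omega) (by omega) (by omega) (by omega)
  obtain ⟨w1, hw1⟩ := vert_walk h x₁ (2 * M - y₁).toNat y₁ hokL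
  obtain ⟨w2, hw2⟩ := horiz_walk h (2 * M) (x₂ - x₁).toNat x₁ hokT
  obtain ⟨w3, hw3⟩ := vert_walk h x₂ (2 * M - y₂).toNat y₂ hokR
  have e1 : ((x₁, y₁ + ((2 * M - y₁).toNat : ℤ)) : ℤ × ℤ) = (x₁, 2 * M) :=
    Prod.ext_iff.mpr ⟨rfl, by omega⟩
  have e2 : ((x₁ + ((x₂ - x₁).toNat : ℤ), 2 * M) : ℤ × ℤ) = (x₂, 2 * M) :=
    Prod.ext_iff.mpr ⟨by omega, rfl⟩
  have e3 : ((x₂, y₂ + ((2 * M - y₂).toNat : ℤ)) : ℤ × ℤ) = (x₂, 2 * M) :=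
    Prod.ext_iff.mpr ⟨rfl, by omega⟩
  have hub : (holedGraph h).dist (x₁, y₁) (x₂, y₂) ≤
      (2 * M - y₁).toNat + (x₂ - x₁).toNat + (2 * M - y₂).toNat := by
    have hd := dist_le ((w1.copy rfl e1).append ((w2.copy rfl e2).append (w3.copy rfl e3).reverse))
    simp [Walk.length_append, hw1, hw2, hw3] at hd
    omega
  have hreach : (holedGraph h).Reachable (x₁, y₁) (x₂, y₂) :=
    ⟨(w1.copy rfl e1).append ((w2.copy rfl e2).append (w3.copy rfl e3).reverse)⟩
  obtain ⟨p, hp⟩ := hreach.exists_walk_length_eq_dist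
  obtain ⟨q, hq, hq1⟩ := exists_fst_eq p (M + 1) (show x₁ ≤ M + 1 from by omega)
      (show M + 1 ≤ x₂ from by omega)
  have hqok : holedOk h q := support_ok p hu q hq
  obtain ⟨-, -, hq3, -, hq5⟩ := hqok
  rw [hMdef] at hq5
  have hqb : q.2 ≤ M ∨ 2 * M ≤ q.2 := by
    by_contra hc
    exact hq5 ⟨by omega, by omega, by omega, by omega⟩
  have hlb := length_ge_via p hq
  rw [hp] at hlb
  have hl1u : l1 (x₁, y₁) q = (x₁ - q.1).natAbs + (y₁ - q.2).natAbs := rfl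
  have hl1v : l1 q (x₂, y₂) = (q.1 - x₂).natAbs + (q.2 - y₂).natAbs := rfl
  rw [hl1u, hl1v] at hlb
  show (holedGraph h).dist (x₁, y₁) (x₂, y₂) =
      (x₁ - 3 ^ (h - 1)).natAbs + (y₁ - 2 * 3 ^ (h - 1)).natAbs + 3 ^ (h - 1) +
        ((2 * 3 ^ (h - 1) - x₂).natAbs + (2 * 3 ^ (h - 1) - y₂).natAbs)
  rw [hMdef]
  omega
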